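/- arXiv:1312.2571 — 2 statements merged into one kernel-verified Lean document; each statement's English description precedes it below -/
import Mathlib

section
/- On the event {W > 0}, one has (1/n) log N_n → log((2d+1)p) almost surely. -/
open MeasureTheory Filter ProbabilityTheory

noncomputable section

/-- A site of the oriented graph on `ℤ^d × ℕ`. -/
abbrev Site (d : ℕ) := (Fin d → ℤ) × ℕ

/-- A percolation configuration. -/
abbrev Config (d : ℕ) := Site d → Site d → Bool

/-- The ℓ¹ norm on `ℤ^d`. -/
def norm1 {d : ℕ} (x : Fin d → ℤ) : ℤ := ∑ i, |x i|

/-- The set of open paths of length `n` starting from `(0,0)` in the configuration `ω`. -/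
def openPathsFromOrigin {d : ℕ} (ω : Config d) (n : ℕ) : Set (ℕ → Fin d → ℤ) :=
  {γ | γ 0 = 0 ∧ (∀ i, i < n → norm1 (γ (i + 1) - γ i) ≤ 1 ∧
      ω (γ i, i) (γ (i + 1), i + 1) = true) ∧ ∀ i, n ≤ i → γ i = γ n}

/-- `N_n`: the number of open paths of length `n` starting from `(0,0)`. -/
def NPaths {d : ℕ} (ω : Config d) (n : ℕ) : ℕ := Nat.card (openPathsFromOrigin ω n)

/-- On the event `{W > 0}`, where `W` is the a.s. limit of the martingale
`N_n / ((2d+1)p)^n`, one has `(1/n) log N_n → log((2d+1)p)` almost surely. -/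
theorem log_NPaths_on_W_pos {d : ℕ} (p : ℝ) (hp0 : 0 < p) (hp1 : p ≤ 1)
    (P : Measure (Config d)) [IsProbabilityMeasure P] (W : Config d → ℝ)
    (hW : ∀ᵐ ω ∂P, Tendsto (fun n => (NPaths ω n : ℝ) / ((2 * d + 1) * p) ^ n)
      atTop (nhds (W ω))) :
    ∀ᵐ ω ∂P, 0 < W ω →
      Tendsto (fun n : ℕ => (1 / n : ℝ) * Real.log (NPaths ω n))
        atTop (nhds (Real.log ((2 * d + 1) * p))) := by
  filter_upwards [hW] with ω hlim hWpos
  set c : ℝ := (2 * d + 1) * p with hc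
  have hcpos : 0 < c := by positivity
  have hlog : Tendsto (fun n => Real.log ((NPaths ω n : ℝ) / c ^ n)) atTop
      (nhds (Real.log (W ω))) :=
    (Real.continuousAt_log hWpos.ne').tendsto.comp hlim
  have h0 : Tendsto (fun n : ℕ => (1 / n : ℝ) * Real.log ((NPaths ω n : ℝ) / c ^ n))
      atTop (nhds 0) := by
    have := tendsto_one_div_atTop_nhds_zero_nat.mul hlog
    simpa using this
  have hsum : Tendsto (fun n : ℕ =>
      (1 / n : ℝ) * Real.log ((NPaths ω n : ℝ) / c ^ n) + Real.log c) atTop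
      (nhds (Real.log c)) := by
    simpa using h0.add (tendsto_const_nhds (x := Real.log c) (f := atTop))
  refine hsum.congr' ?_
  have hev : ∀ᶠ n in atTop, 0 < (NPaths ω n : ℝ) / c ^ n :=
    hlim.eventually (eventually_gt_nhds hWpos)
  filter_upwards [hev, eventually_ge_atTop 1] with n hn hn1
  have hN0 : (NPaths ω n : ℝ) ≠ 0 := by
    intro h; rw [h] at hn; simp at hn
  have hNpos : 0 < (NPaths ω n : ℝ) :=
    lt_of_le_of_ne (Nat.cast_nonneg _) (Ne.symm hN0)
  have hlogN : Real.log ((NPaths ω n : ℝ)) =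
      Real.log ((NPaths ω n : ℝ) / c ^ n) + n * Real.log c := by
    rw [Real.log_div hN0 (pow_pos hcpos n).ne', Real.log_pow]; ring
  have hnne : (n : ℝ) ≠ 0 := by
    exact_mod_cast Nat.one_le_iff_ne_zero.mp hn1
  rw [hlogN]
  field_simp
end
end

section
/- Let (Ω, F, P, θ) be a measure-preserving system and σ : Ω → N a random variable such that for all measurable A ∈ B(R) and B ∈ F, P(σ ∈ A, θ̃^{-1}(B)) = P(σ ∈ A) P(B), where θ̃ is the (random) translation associated with σ. Then the random variables (σ ∘ θ̃^j)_{j≥0} are independent and identically distributed under P. -/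
open MeasureTheory Filter ProbabilityTheory

noncomputable section

/-- Key lemma: finite-dimensional factorization over `Finset.range n`. -/
theorem regeneration_range {Ω : Type*} [MeasurableSpace Ω]
    (P : Measure Ω) [IsProbabilityMeasure P]
    (θ : Ω → Ω) (hθmeas : Measurable θ)
    (σ : Ω → ℕ) (hσmeas : Measurable σ)
    (hregen : ∀ (A : Set ℕ) (B : Set Ω), MeasurableSet B →
      P ({ω | σ ω ∈ A} ∩ θ ⁻¹' B) = P {ω | σ ω ∈ A} * P B) :
    ∀ (n : ℕ) (A : ℕ → Set ℕ),
      P (⋂ j ∈ Finset.range n, (fun ω => σ (θ^[j] ω)) ⁻¹' A j)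
        = ∏ j ∈ Finset.range n, P (σ ⁻¹' A j) := by
  intro n
  induction n with
  | zero => simp
  | succ n ih =>
    intro A
    have hB : MeasurableSet (⋂ j ∈ Finset.range n,
        (fun ω => σ (θ^[j] ω)) ⁻¹' A (j + 1)) := by
      refine MeasurableSet.biInter (Set.to_countable _) fun j _ => ?_
      exact (hσmeas.comp (hθmeas.iterate j)) (MeasurableSet.of_discrete)
    have hset : (⋂ j ∈ Finset.range (n + 1), (fun ω => σ (θ^[j] ω)) ⁻¹' A j)
        = {ω | σ ω ∈ A 0} ∩
          θ ⁻¹' (⋂ j ∈ Finset.range n, (fun ω => σ (θ^[j] ω)) ⁻¹' A (j + 1)) := by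
      ext ω
      simp only [Set.mem_iInter, Set.mem_inter_iff, Set.mem_preimage, Set.mem_setOf_eq,
        Finset.mem_range]
      constructor
      · intro h
        refine ⟨h 0 (Nat.succ_pos n), fun j hj => ?_⟩
        have := h (j + 1) (Nat.succ_lt_succ hj)
        simpa [Function.iterate_succ_apply] using this
      · rintro ⟨h0, h⟩ j hj
        cases j with
        | zero => simpa using h0
        | succ j =>
          have := h j (Nat.lt_of_succ_lt_succ hj)
          simpa [Function.iterate_succ_apply] using this
    rw [hset, hregen (A 0) _ hB, ih (fun j => A (j + 1)), Finset.prod_range_succ']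
    have : P {ω | σ ω ∈ A 0} = P (σ ⁻¹' A 0) := rfl
    rw [this, mul_comm]

/-- Abstract regeneration property: if `θ̃` is a measurable map preserving `P` and the
random variable `σ` satisfies `P(σ ∈ A, θ̃⁻¹(B)) = P(σ ∈ A) P(B)` for every `A` and every
measurable `B`, then the random variables `(σ ∘ θ̃^j)_{j ≥ 0}` are independent and
identically distributed under `P`. -/
theorem regeneration_iid {Ω : Type*} [MeasurableSpace Ω]
    (P : Measure Ω) [IsProbabilityMeasure P]
    (θ : Ω → Ω) (hθmeas : Measurable θ) (hθ : MeasurePreserving θ P P)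
    (σ : Ω → ℕ) (hσmeas : Measurable σ)
    (hregen : ∀ (A : Set ℕ) (B : Set Ω), MeasurableSet B →
      P ({ω | σ ω ∈ A} ∩ θ ⁻¹' B) = P {ω | σ ω ∈ A} * P B) :
    iIndepFun (fun (j : ℕ) (ω : Ω) => σ (θ^[j] ω)) P ∧
    ∀ j : ℕ, IdentDistrib (fun ω => σ (θ^[j] ω)) σ P P := by
  have hmeas : ∀ j : ℕ, Measurable fun ω => σ (θ^[j] ω) :=
    fun j => hσmeas.comp (hθmeas.iterate j)
  have hident : ∀ j : ℕ, IdentDistrib (fun ω => σ (θ^[j] ω)) σ P P := by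
    intro j
    refine ⟨(hmeas j).aemeasurable, hσmeas.aemeasurable, ?_⟩
    have : (fun ω => σ (θ^[j] ω)) = σ ∘ θ^[j] := rfl
    rw [this, ← Measure.map_map hσmeas (hθmeas.iterate j), (hθ.iterate j).map_eq]
  refine ⟨?_, hident⟩
  rw [iIndepFun_iff_measure_inter_preimage_eq_mul]
  intro S sets _
  obtain ⟨n, hn⟩ : ∃ n, ∀ j ∈ S, j < n := ⟨(S.sup id) + 1, fun j hj =>
    Nat.lt_succ_of_le (Finset.le_sup (f := id) hj)⟩
  classical
  set A : ℕ → Set ℕ := fun j => if j ∈ S then sets j else Set.univ with hA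
  have hset : (⋂ j ∈ S, (fun ω => σ (θ^[j] ω)) ⁻¹' sets j)
      = ⋂ j ∈ Finset.range n, (fun ω => σ (θ^[j] ω)) ⁻¹' A j := by
    ext ω
    simp only [Set.mem_iInter, Finset.mem_range, hA]
    constructor
    · intro h j _
      by_cases hj : j ∈ S
      · simpa [hj] using h j hj
      · simp [hj]
    · intro h j hj
      have := h j (hn j hj)
      simpa [hj] using this
  have hprod : (∏ j ∈ S, P ((fun ω => σ (θ^[j] ω)) ⁻¹' sets j))
      = ∏ j ∈ Finset.range n, P (σ ⁻¹' A j) := by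
    have h1 : (∏ j ∈ S, P ((fun ω => σ (θ^[j] ω)) ⁻¹' sets j))
        = ∏ j ∈ S, P (σ ⁻¹' A j) := by
      refine Finset.prod_congr rfl fun j hj => ?_
      have := (hident j).measure_mem_eq (MeasurableSet.of_discrete (s := sets j))
      simpa [hA, hj, Set.preimage] using this
    rw [h1]
    refine Finset.prod_subset (fun j hj => Finset.mem_range.2 (hn j hj)) ?_
    intro j _ hj
    simp [hA, hj]
  rw [hset, regeneration_range P θ hθmeas σ hσmeas hregen n A, hprod]
end
end
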